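/- In the polynomial ring ℚ[λ1, λ2, λ3, x], the identity (λ1·x²·(λ2 + x + x²))² = 4·(λ1·x²)³ + a1·(λ1·x²)² + a2·(λ1·x²) holds, where a1 = λ2² + 2λ2·x(1 + x) + x²(−4λ1 − 4λ3 + (1 + x)²) and a2 = 4λ1λ3·x⁴. (Equivalently, x ↦ (x, λ1x², λ1x²(λ2 + x + x²)) defines a section Q of the elliptic fibration z1² = 4y1³ + a1(x1)y1² + a2(x1)y1 attached to the K3 surface S_6.) -/
import Mathlib


open MvPolynomial

theorem stmt_17 (l1 l2 l3 x : MvPolynomial (Fin 4) ℚ)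
    (h1 : l1 = X 0) (h2 : l2 = X 1) (h3 : l3 = X 2) (hx : x = X 3) :
    (l1 * x ^ 2 * (l2 + x + x ^ 2)) ^ 2
      = 4 * (l1 * x ^ 2) ^ 3
        + (l2 ^ 2 + 2 * l2 * x * (1 + x) + x ^ 2 * (-4 * l1 - 4 * l3 + (1 + x) ^ 2))
            * (l1 * x ^ 2) ^ 2
        + (4 * l1 * l3 * x ^ 4) * (l1 * x ^ 2) := by
  subst h1 h2 h3 hx; ring
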